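/- arXiv:2511.04380 — 2 statements merged into one kernel-verified Lean document; each statement's English description precedes it below -/
import Mathlib

section
/- For any real symmetric matrices A and B of the same size, and any integers p ≥ 1 and 0 ≤ ℓ ≤ 2p-2, one has trace(A B^{2p-2-ℓ} A B^ℓ) ≤ trace(A² B^{2p-2}). -/
open Matrix

lemma key_pow (x y : ℝ) (k l : ℕ) (h : Even (k + l)) :
    x ^ k * y ^ l + x ^ l * y ^ k ≤ x ^ (k + l) + y ^ (k + l) := by
  have h0 : 0 ≤ (x ^ k - y ^ k) * (x ^ l - y ^ l) := by
    have hpar : (Even k ↔ Even l) := by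
      rcases Nat.even_add.mp h with h'
      exact h'
    by_cases hk : Even k
    · have hl : Even l := hpar.mp hk
      rcases le_total |x| |y| with hxy | hxy
      · have h1 : x ^ k ≤ y ^ k := by
          rw [← hk.pow_abs x, ← hk.pow_abs y]
          exact pow_le_pow_left₀ (abs_nonneg x) hxy k
        have h2 : x ^ l ≤ y ^ l := by
          rw [← hl.pow_abs x, ← hl.pow_abs y]
          exact pow_le_pow_left₀ (abs_nonneg x) hxy l
        nlinarith [mul_nonneg (sub_nonneg.mpr h1) (sub_nonneg.mpr h2)]
      · have h1 : y ^ k ≤ x ^ k := by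
          rw [← hk.pow_abs x, ← hk.pow_abs y]
          exact pow_le_pow_left₀ (abs_nonneg y) hxy k
        have h2 : y ^ l ≤ x ^ l := by
          rw [← hl.pow_abs x, ← hl.pow_abs y]
          exact pow_le_pow_left₀ (abs_nonneg y) hxy l
        nlinarith [mul_nonneg (sub_nonneg.mpr h1) (sub_nonneg.mpr h2)]
    · have hko : Odd k := Nat.not_even_iff_odd.mp hk
      have hlo : Odd l := Nat.not_even_iff_odd.mp (fun h' => hk (hpar.mpr h'))
      rcases le_total x y with hxy | hxy
      · have h1 : x ^ k ≤ y ^ k := (hko.strictMono_pow (R := ℝ)).monotone hxy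
        have h2 : x ^ l ≤ y ^ l := (hlo.strictMono_pow (R := ℝ)).monotone hxy
        nlinarith [mul_nonneg (sub_nonneg.mpr h1) (sub_nonneg.mpr h2)]
      · have h1 : y ^ k ≤ x ^ k := (hko.strictMono_pow (R := ℝ)).monotone hxy
        have h2 : y ^ l ≤ x ^ l := (hlo.strictMono_pow (R := ℝ)).monotone hxy
        nlinarith [mul_nonneg (sub_nonneg.mpr h1) (sub_nonneg.mpr h2)]
  nlinarith [pow_add x k l, pow_add y k l]

theorem stmt_0 {n : ℕ} (A B : Matrix (Fin n) (Fin n) ℝ)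
    (hA : A.IsSymm) (hB : B.IsSymm) (p : ℕ) (hp : 1 ≤ p) (ℓ : ℕ) (hℓ : ℓ ≤ 2 * p - 2) :
    (A * B ^ (2 * p - 2 - ℓ) * A * B ^ ℓ).trace ≤ (A ^ 2 * B ^ (2 * p - 2)).trace := by
  have hH : B.IsHermitian := by
    rw [Matrix.IsHermitian]
    exact (Matrix.conjTranspose_eq_transpose_of_trivial _).trans hB
  set U : Matrix (Fin n) (Fin n) ℝ := (hH.eigenvectorUnitary : Matrix (Fin n) (Fin n) ℝ) with hU
  set d : Fin n → ℝ := hH.eigenvalues with hd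
  have hUU : star U * U = 1 := (Matrix.mem_unitaryGroup_iff').mp hH.eigenvectorUnitary.2
  have hUU' : U * star U = 1 := (Matrix.mem_unitaryGroup_iff).mp hH.eigenvectorUnitary.2
  have hBspec : B = U * diagonal d * star U := by
    have := hH.spectral_theorem
    simpa using this
  set C : Matrix (Fin n) (Fin n) ℝ := star U * A * U with hC
  have hA' : A = U * C * star U := by
    rw [hC]
    calc A = (U * star U) * A * (U * star U) := by rw [hUU']; simp
    _ = U * (star U * A * U) * star U := by noncomm_ring
  have hCsymm : ∀ i j, C j i = C i j := by
    have hT : Cᵀ = C := by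
      rw [hC, Matrix.transpose_mul, Matrix.transpose_mul, hA,
        Matrix.star_eq_conjTranspose, Matrix.conjTranspose_eq_transpose_of_trivial,
        Matrix.transpose_transpose, mul_assoc]
    intro i j
    calc C j i = Cᵀ i j := rfl
    _ = C i j := by rw [hT]
  have hBpow : ∀ m : ℕ, B ^ m = U * diagonal (fun i => d i ^ m) * star U := by
    intro m
    induction m with
    | zero =>
        have h1 : (diagonal fun i : Fin n => d i ^ 0) = (1 : Matrix (Fin n) (Fin n) ℝ) := by
          simp
        rw [pow_zero, h1, mul_one, hUU']
    | succ m ih =>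
        rw [pow_succ, ih, hBspec]
        calc U * diagonal (fun i => d i ^ m) * star U * (U * diagonal d * star U)
            = U * (diagonal (fun i => d i ^ m) * (star U * U) * diagonal d) * star U := by
              noncomm_ring
        _ = U * diagonal (fun i => d i ^ (m+1)) * star U := by
              rw [hUU, mul_one, Matrix.diagonal_mul_diagonal]
              have h2 : (fun i => d i ^ m * d i) = fun i => d i ^ (m+1) :=
                funext fun i => (pow_succ _ _).symm
              rw [h2]
  have htr : ∀ a b : ℕ, (A * B ^ a * A * B ^ b).trace
      = ∑ i, ∑ j, (C i j * C j i) * (d j ^ a * d i ^ b) := by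
    intro a b
    have h1 : A * B ^ a * A * B ^ b
        = U * (C * diagonal (fun i => d i ^ a) * C * diagonal (fun i => d i ^ b)) * star U := by
      rw [hBpow, hBpow]
      conv_lhs => rw [hA']
      calc U * C * star U * (U * diagonal (fun i => d i ^ a) * star U) * (U * C * star U)
            * (U * diagonal (fun i => d i ^ b) * star U)
          = U * (C * (star U * U) * diagonal (fun i => d i ^ a) * (star U * U) * C
            * (star U * U) * diagonal (fun i => d i ^ b)) * star U := by noncomm_ring
        _ = _ := by rw [hUU]; noncomm_ring
    rw [h1, Matrix.trace_mul_cycle, ← mul_assoc, hUU, one_mul]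
    calc (C * diagonal (fun i => d i ^ a) * C * diagonal (fun i => d i ^ b)).trace
        = ∑ i, (C * diagonal (fun i => d i ^ a) * C) i i * d i ^ b := by
          rw [Matrix.trace]
          exact Finset.sum_congr rfl fun i _ => Matrix.mul_diagonal _ _ _ _
      _ = ∑ i, (∑ j, (C * diagonal (fun i => d i ^ a)) i j * C j i) * d i ^ b := by
          exact Finset.sum_congr rfl fun i _ => by rw [Matrix.mul_apply]
      _ = ∑ i, ∑ j, (C i j * C j i) * (d j ^ a * d i ^ b) := by
          refine Finset.sum_congr rfl fun i _ => ?_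
          rw [Finset.sum_mul]
          exact Finset.sum_congr rfl fun j _ => by rw [Matrix.mul_diagonal]; ring
  have hA2 : A ^ 2 * B ^ (2*p-2) = A * B ^ 0 * A * B ^ (2*p-2) := by
    rw [pow_zero, pow_two]; noncomm_ring
  rw [hA2, htr, htr]
  set k := 2*p - 2 - ℓ with hk
  set m := 2*p - 2 with hm
  have hkl : k + ℓ = m := Nat.sub_add_cancel hℓ
  have hmev : Even m := by
    have h3 : m = 2 * (p - 1) := by omega
    exact h3 ▸ even_two_mul (p-1)
  set c : Fin n → Fin n → ℝ := fun i j => (C i j)^2 with hcc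
  have hrw : ∀ a b : ℕ, (∑ i, ∑ j, (C i j * C j i) * (d j ^ a * d i ^ b))
      = ∑ i, ∑ j, c i j * (d j ^ a * d i ^ b) := by
    intro a b
    exact Finset.sum_congr rfl fun i _ => Finset.sum_congr rfl fun j _ => by
      simp only [hcc]; rw [hCsymm]; ring
  rw [hrw, hrw]
  have hcsym : ∀ i j, c j i = c i j := fun i j => by simp only [hcc]; rw [hCsymm]
  have hswap : ∀ a b : ℕ, (∑ i, ∑ j, c i j * (d j ^ a * d i ^ b))
      = ∑ i, ∑ j, c i j * (d i ^ a * d j ^ b) := by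
    intro a b
    rw [Finset.sum_comm]
    exact Finset.sum_congr rfl fun i _ => Finset.sum_congr rfl fun j _ => by rw [hcsym]
  have key : (∑ i, ∑ j, c i j * (d j ^ k * d i ^ ℓ)) + (∑ i, ∑ j, c i j * (d i ^ k * d j ^ ℓ))
      ≤ (∑ i, ∑ j, c i j * (d j ^ 0 * d i ^ m)) + (∑ i, ∑ j, c i j * (d i ^ 0 * d j ^ m)) := by
    rw [← Finset.sum_add_distrib, ← Finset.sum_add_distrib]
    refine Finset.sum_le_sum fun i _ => ?_
    rw [← Finset.sum_add_distrib, ← Finset.sum_add_distrib]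
    refine Finset.sum_le_sum fun j _ => ?_
    have h0 : (0:ℝ) ≤ c i j := sq_nonneg (C i j)
    have hkey := key_pow (d j) (d i) k ℓ (by rw [hkl]; exact hmev)
    rw [hkl] at hkey
    have h4 : d j ^ k * d i ^ ℓ + d i ^ k * d j ^ ℓ ≤ d j ^ 0 * d i ^ m + d i ^ 0 * d j ^ m := by
      simp only [pow_zero, one_mul]
      linarith
    have h5 := mul_le_mul_of_nonneg_left h4 h0
    rw [mul_add, mul_add] at h5
    linarith
  rw [← hswap k ℓ, ← hswap 0 m] at key
  linarith
end

section
/- Let H_0 and V be bounded self-adjoint operators, and define recursively T_0(t) = e^{-itH_0} and T_j(t) = ∫_0^t e^{-i(t-s)H_0} V T_{j-1}(s) ds. Then for all s, t ≥ 0 and all k ≥ 0, T_k(s+t) = ∑_{j=0}^k T_j(s) T_{k-j}(t). -/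
open MeasureTheory Finset

variable {H : Type*} [NormedAddCommGroup H] [InnerProductSpace ℂ H] [CompleteSpace H]

/-- The terms of the Dyson series: `T₀(t) = e^{-itH₀}` and
`T_j(t) = ∫_0^t e^{-i(t-s)H₀} V T_{j-1}(s) ds`. -/
noncomputable def DysonT (H0 V : H →L[ℂ] H) : ℕ → ℝ → (H →L[ℂ] H)
  | 0, t => NormedSpace.exp ((-(Complex.I * t)) • H0)
  | (j + 1), t =>
      ∫ s in (0 : ℝ)..t,
        NormedSpace.exp ((-(Complex.I * ((t : ℂ) - s))) • H0) * V * DysonT H0 V j s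

section Aux

variable (H0 V : H →L[ℂ] H)

lemma dyson_exp_smul_add (a b : ℂ) :
    NormedSpace.exp ((a + b) • H0) =
      NormedSpace.exp (a • H0) * NormedSpace.exp (b • H0) := by
  rw [add_smul]
  let +nondep : NormedAlgebra ℚ (H →L[ℂ] H) := .restrictScalars ℚ ℂ (H →L[ℂ] H)
  exact NormedSpace.exp_add_of_commute (((Commute.refl H0).smul_left a).smul_right b)

lemma dyson_exp_cont {c : ℝ → ℂ} (hc : Continuous c) :
    Continuous fun t : ℝ => NormedSpace.exp (c t • H0) :=
  by let +nondep : NormedAlgebra ℚ (H →L[ℂ] H) := .restrictScalars ℚ ℂ (H →L[ℂ] H); exact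
  NormedSpace.exp_continuous.comp (hc.smul continuous_const)

lemma dyson_integral_const_mul {f : ℝ → (H →L[ℂ] H)} (hf : Continuous f)
    (c : H →L[ℂ] H) (a b : ℝ) :
    (∫ u in a..b, c * f u) = c * ∫ u in a..b, f u := by
  simpa using
    (ContinuousLinearMap.mul ℂ (H →L[ℂ] H) c).intervalIntegral_comp_comm
      (hf.intervalIntegrable a b)

lemma dyson_integral_mul_const {f : ℝ → (H →L[ℂ] H)} (hf : Continuous f)
    (c : H →L[ℂ] H) (a b : ℝ) :
    (∫ u in a..b, f u * c) = (∫ u in a..b, f u) * c := by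
  simpa using
    ((ContinuousLinearMap.mul ℂ (H →L[ℂ] H)).flip c).intervalIntegral_comp_comm
      (hf.intervalIntegrable a b)

lemma dyson_cont : ∀ j, Continuous (DysonT H0 V j) := by
  intro j
  induction j with
  | zero =>
      exact dyson_exp_cont H0 (by fun_prop)
  | succ j ih =>
      have hg : Continuous fun u : ℝ =>
          NormedSpace.exp ((Complex.I * u) • H0) * V * DysonT H0 V j u :=
        ((dyson_exp_cont H0 (by fun_prop)).mul continuous_const).mul ih
      have key : DysonT H0 V (j + 1) = fun t : ℝ =>
          NormedSpace.exp ((-(Complex.I * t)) • H0) *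
            ∫ u in (0 : ℝ)..t,
              NormedSpace.exp ((Complex.I * u) • H0) * V * DysonT H0 V j u := by
        funext t
        show (∫ u in (0 : ℝ)..t,
            NormedSpace.exp ((-(Complex.I * ((t : ℂ) - u))) • H0) * V * DysonT H0 V j u) = _
        rw [← dyson_integral_const_mul hg]
        apply intervalIntegral.integral_congr
        intro u _
        have : (-(Complex.I * ((t : ℂ) - u))) = (-(Complex.I * t)) + Complex.I * u := by ring
        simp only [this, dyson_exp_smul_add, mul_assoc]
      rw [key]
      exact (dyson_exp_cont H0 (by fun_prop)).mul
        (intervalIntegral.continuous_primitive (fun a b => hg.intervalIntegrable a b) 0)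

lemma dyson_key (k : ℕ) : ∀ s t : ℝ,
    DysonT H0 V k (s + t) =
      ∑ j ∈ Finset.range (k + 1), DysonT H0 V j s * DysonT H0 V (k - j) t := by
  induction k with
  | zero =>
      intro s t
      show NormedSpace.exp ((-(Complex.I * ((s + t : ℝ) : ℂ))) • H0) = _
      have : (-(Complex.I * ((s + t : ℝ) : ℂ))) = (-(Complex.I * s)) + (-(Complex.I * t)) := by
        push_cast; ring
      rw [this, dyson_exp_smul_add]
      simp [DysonT]
  | succ k ih =>
      intro s t
      set F : ℝ → (H →L[ℂ] H) := fun u =>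
        NormedSpace.exp ((-(Complex.I * (((s + t : ℝ) : ℂ) - u))) • H0) * V *
          DysonT H0 V k u with hF
      have hFc : Continuous F :=
        ((dyson_exp_cont H0 (by fun_prop)).mul continuous_const).mul (dyson_cont H0 V k)
      have hdef : DysonT H0 V (k + 1) (s + t) = ∫ u in (0 : ℝ)..(s + t), F u := rfl
      have hsplit : (∫ u in (0 : ℝ)..(s + t), F u) =
          (∫ u in (0 : ℝ)..t, F u) + ∫ u in t..(s + t), F u :=
        (intervalIntegral.integral_add_adjacent_intervals (hFc.intervalIntegrable 0 t)
          (hFc.intervalIntegrable t (s + t))).symm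
      -- first piece
      have hg1 : Continuous fun u : ℝ =>
          NormedSpace.exp ((-(Complex.I * ((t : ℂ) - u))) • H0) * V * DysonT H0 V k u :=
        ((dyson_exp_cont H0 (by fun_prop)).mul continuous_const).mul (dyson_cont H0 V k)
      have h1 : (∫ u in (0 : ℝ)..t, F u) =
          DysonT H0 V 0 s * DysonT H0 V (k + 1) t := by
        have hpt : ∀ u : ℝ, F u = NormedSpace.exp ((-(Complex.I * s)) • H0) *
            (NormedSpace.exp ((-(Complex.I * ((t : ℂ) - u))) • H0) * V * DysonT H0 V k u) := by
          intro u
          have : (-(Complex.I * (((s + t : ℝ) : ℂ) - u))) =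
              (-(Complex.I * s)) + (-(Complex.I * ((t : ℂ) - u))) := by push_cast; ring
          rw [hF]
          simp only
          rw [this, dyson_exp_smul_add]
          simp only [mul_assoc]
        calc (∫ u in (0 : ℝ)..t, F u)
            = ∫ u in (0 : ℝ)..t, NormedSpace.exp ((-(Complex.I * s)) • H0) *
                (NormedSpace.exp ((-(Complex.I * ((t : ℂ) - u))) • H0) * V *
                  DysonT H0 V k u) :=
              intervalIntegral.integral_congr fun u _ => hpt u
          _ = NormedSpace.exp ((-(Complex.I * s)) • H0) *
              ∫ u in (0 : ℝ)..t, NormedSpace.exp ((-(Complex.I * ((t : ℂ) - u))) • H0) * V *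
                DysonT H0 V k u := dyson_integral_const_mul hg1 _ _ _
          _ = DysonT H0 V 0 s * DysonT H0 V (k + 1) t := rfl
      -- second piece
      have hgj : ∀ j : ℕ, Continuous fun r : ℝ =>
          NormedSpace.exp ((-(Complex.I * ((s : ℂ) - r))) • H0) * V * DysonT H0 V j r :=
        fun j => ((dyson_exp_cont H0 (by fun_prop)).mul continuous_const).mul (dyson_cont H0 V j)
      have h2 : (∫ u in t..(s + t), F u) =
          ∑ j ∈ Finset.range (k + 1), DysonT H0 V (j + 1) s * DysonT H0 V (k - j) t := by
        have hsub : (∫ u in t..(s + t), F u) = ∫ r in (0 : ℝ)..s, F (r + t) := by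
          rw [intervalIntegral.integral_comp_add_right (fun u => F u) t, zero_add]
        have hpt : ∀ r : ℝ, F (r + t) = ∑ j ∈ Finset.range (k + 1),
            (NormedSpace.exp ((-(Complex.I * ((s : ℂ) - r))) • H0) * V * DysonT H0 V j r) *
              DysonT H0 V (k - j) t := by
          intro r
          have he : (-(Complex.I * (((s + t : ℝ) : ℂ) - ((r + t : ℝ) : ℂ)))) =
              (-(Complex.I * ((s : ℂ) - r))) := by push_cast; ring
          rw [hF]
          simp only
          rw [he, ih r t, Finset.mul_sum]
          exact Finset.sum_congr rfl fun j _ => by simp only [mul_assoc]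
        calc (∫ u in t..(s + t), F u)
            = ∫ r in (0 : ℝ)..s, ∑ j ∈ Finset.range (k + 1),
                (NormedSpace.exp ((-(Complex.I * ((s : ℂ) - r))) • H0) * V *
                  DysonT H0 V j r) * DysonT H0 V (k - j) t := by
              rw [hsub]; exact intervalIntegral.integral_congr fun r _ => hpt r
          _ = ∑ j ∈ Finset.range (k + 1), ∫ r in (0 : ℝ)..s,
                (NormedSpace.exp ((-(Complex.I * ((s : ℂ) - r))) • H0) * V *
                  DysonT H0 V j r) * DysonT H0 V (k - j) t :=
              intervalIntegral.integral_finset_sum fun j _ =>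
                ((hgj j).mul continuous_const).intervalIntegrable 0 s
          _ = ∑ j ∈ Finset.range (k + 1),
                (∫ r in (0 : ℝ)..s, NormedSpace.exp ((-(Complex.I * ((s : ℂ) - r))) • H0) * V *
                  DysonT H0 V j r) * DysonT H0 V (k - j) t :=
              Finset.sum_congr rfl fun j _ => dyson_integral_mul_const (hgj j) _ _ _
          _ = ∑ j ∈ Finset.range (k + 1), DysonT H0 V (j + 1) s * DysonT H0 V (k - j) t := rfl
      rw [hdef, hsplit, h1, h2,
        Finset.sum_range_succ' (fun j => DysonT H0 V j s * DysonT H0 V (k + 1 - j) t) (k + 1)]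
      simp only [Nat.succ_sub_succ_eq_sub, Nat.sub_zero]
      rw [add_comm]

end Aux

/-- Decomposition formula for the Dyson series terms:
`T_k(s+t) = ∑_{j=0}^k T_j(s) T_{k-j}(t)`. -/
theorem stmt_7 (H0 V : H →L[ℂ] H) (hH0 : IsSelfAdjoint H0) (hV : IsSelfAdjoint V)
    (s t : ℝ) (hs : 0 ≤ s) (ht : 0 ≤ t) (k : ℕ) :
    DysonT H0 V k (s + t) = ∑ j ∈ Finset.range (k + 1), DysonT H0 V j s * DysonT H0 V (k - j) t := by
  exact dyson_key H0 V k s t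
end
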